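/- arXiv:2411.16572 — 3 statements merged into one kernel-verified Lean document; each statement's English description precedes it below -/
import Mathlib

section
/- Let m_j = m^{z_j}(iη_j), u_j = u^{z_j}(iη_j) for j = 1,2 and define β_± := 1 - u₁u₂ Re(z₁z̄₂) ± √s with s := m₁²m₂² - u₁²u₂² (Im(z₁z̄₂))². Then β₊β₋ = u₁u₂|z₁-z₂|² - m₁²(u₂/u₁)(1-u₁) - m₂²(u₁/u₂)(1-u₂) + (1-u₁)(1-u₂). -/
theorem key_msq (z : ℂ) (η : ℝ) (m u : ℂ)
    (hm : m ≠ 0) (ha : Complex.I * η + m ≠ 0)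
    (heq : -(1 / m) = Complex.I * η + m - (‖z‖ : ℂ) ^ 2 / (Complex.I * η + m))
    (hu : u = m / (Complex.I * η + m)) :
    m ^ 2 = u ^ 2 * (‖z‖ : ℂ) ^ 2 - u := by
  subst hu
  set a := Complex.I * (η:ℂ) with hadef
  field_simp at heq ⊢
  linear_combination (-1 : ℂ) * heq

/-- Product formula for the two non-trivial eigenvalues `β_±` of the two-body stability
operator: `β₊β₋ = u₁u₂|z₁-z₂|² - m₁²(u₂/u₁)(1-u₁) - m₂²(u₁/u₂)(1-u₂) + (1-u₁)(1-u₂)`. -/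
theorem beta_product_formula
    (z₁ z₂ : ℂ) (η₁ η₂ : ℝ) (hη₁ : η₁ ≠ 0) (hη₂ : η₂ ≠ 0)
    (m₁ m₂ u₁ u₂ : ℂ)
    (hsign₁ : m₁.im * η₁ > 0) (hsign₂ : m₂.im * η₂ > 0)
    (heq₁ : -(1 / m₁) = Complex.I * η₁ + m₁ - (‖z₁‖ : ℂ) ^ 2 / (Complex.I * η₁ + m₁))
    (heq₂ : -(1 / m₂) = Complex.I * η₂ + m₂ - (‖z₂‖ : ℂ) ^ 2 / (Complex.I * η₂ + m₂))
    (hu₁ : u₁ = m₁ / (Complex.I * η₁ + m₁))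
    (hu₂ : u₂ = m₂ / (Complex.I * η₂ + m₂))
    (w : ℂ)
    (hw : w ^ 2 = m₁ ^ 2 * m₂ ^ 2
        - u₁ ^ 2 * u₂ ^ 2 * (((z₁ * (starRingEnd ℂ) z₂).im : ℂ)) ^ 2) :
    (1 - u₁ * u₂ * ((z₁ * (starRingEnd ℂ) z₂).re : ℂ) + w) *
        (1 - u₁ * u₂ * ((z₁ * (starRingEnd ℂ) z₂).re : ℂ) - w)
      = u₁ * u₂ * (‖z₁ - z₂‖ : ℂ) ^ 2
          - m₁ ^ 2 * (u₂ / u₁) * (1 - u₁) - m₂ ^ 2 * (u₁ / u₂) * (1 - u₂)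
          + (1 - u₁) * (1 - u₂) := by
  have hm₁ : m₁ ≠ 0 := by
    intro h; rw [h] at hsign₁; simp at hsign₁
  have hm₂ : m₂ ≠ 0 := by
    intro h; rw [h] at hsign₂; simp at hsign₂
  have ha₁ : Complex.I * η₁ + m₁ ≠ 0 := by
    intro h
    have him := congrArg Complex.im h
    simp [Complex.add_im, Complex.mul_im] at him
    have h2 : m₁.im = -η₁ := by linarith
    rw [h2] at hsign₁
    nlinarith [mul_self_nonneg η₁]
  have ha₂ : Complex.I * η₂ + m₂ ≠ 0 := by
    intro h
    have him := congrArg Complex.im h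
    simp [Complex.add_im, Complex.mul_im] at him
    have h2 : m₂.im = -η₂ := by linarith
    rw [h2] at hsign₂
    nlinarith [mul_self_nonneg η₂]
  have hu₁ne : u₁ ≠ 0 := by rw [hu₁]; exact div_ne_zero hm₁ ha₁
  have hu₂ne : u₂ ≠ 0 := by rw [hu₂]; exact div_ne_zero hm₂ ha₂
  have key₁ : m₁ ^ 2 = u₁ ^ 2 * (‖z₁‖ : ℂ) ^ 2 - u₁ :=
    key_msq z₁ η₁ m₁ u₁ hm₁ ha₁ heq₁ hu₁
  have key₂ : m₂ ^ 2 = u₂ ^ 2 * (‖z₂‖ : ℂ) ^ 2 - u₂ :=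
    key_msq z₂ η₂ m₂ u₂ hm₂ ha₂ heq₂ hu₂
  have hreR : ((z₁ * (starRingEnd ℂ) z₂).re) ^ 2 + ((z₁ * (starRingEnd ℂ) z₂).im) ^ 2
      = (‖z₁‖) ^ 2 * (‖z₂‖) ^ 2 := by
    have : (‖z₁ * (starRingEnd ℂ) z₂‖) ^ 2
        = ((z₁ * (starRingEnd ℂ) z₂).re) ^ 2 + ((z₁ * (starRingEnd ℂ) z₂).im) ^ 2 := by
      rw [Complex.sq_norm, Complex.normSq_apply]; ring
    rw [← this, norm_mul, Complex.norm_conj]; ring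
  have hre : (((z₁ * (starRingEnd ℂ) z₂).re : ℂ)) ^ 2 + (((z₁ * (starRingEnd ℂ) z₂).im : ℂ)) ^ 2
      = ((‖z₁‖ : ℂ)) ^ 2 * ((‖z₂‖ : ℂ)) ^ 2 := by
    exact_mod_cast congrArg (fun r : ℝ => (r : ℂ)) hreR
  have habsR : (‖z₁ - z₂‖) ^ 2
      = (‖z₁‖) ^ 2 + (‖z₂‖) ^ 2 - 2 * ((z₁ * (starRingEnd ℂ) z₂).re) := by
    simp only [Complex.sq_norm, Complex.normSq_apply, Complex.sub_re, Complex.sub_im,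
      Complex.mul_re, Complex.conj_re, Complex.conj_im]
    ring
  have habs : ((‖z₁ - z₂‖ : ℂ)) ^ 2
      = ((‖z₁‖ : ℂ)) ^ 2 + ((‖z₂‖ : ℂ)) ^ 2
        - 2 * (((z₁ * (starRingEnd ℂ) z₂).re : ℂ)) := by
    exact_mod_cast congrArg (fun r : ℝ => (r : ℂ)) habsR
  have h1 : m₁ ^ 2 * (u₂ / u₁) = (u₁ * (‖z₁‖ : ℂ) ^ 2 - 1) * u₂ := by
    rw [key₁]; field_simp
  have h2 : m₂ ^ 2 * (u₁ / u₂) = (u₂ * (‖z₂‖ : ℂ) ^ 2 - 1) * u₁ := by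
    rw [key₂]; field_simp
  rw [h1, h2]
  linear_combination (-1 : ℂ) * hw + (-(m₂ ^ 2)) * key₁
    + (-(u₁ ^ 2 * (‖z₁‖ : ℂ) ^ 2 - u₁)) * key₂
    + (-(u₁ * u₂)) * habs + (u₁ ^ 2 * u₂ ^ 2) * hre
end

section
/- Let m = m^z(iη), u = m/(iη + m), and let M := [[m I_n, -z u I_n], [-z̄ u I_n, m I_n]]. Then M satisfies the Matrix Dyson Equation -M⁻¹ = iη·I + Z + S[M], where Z = [[0, z I_n],[z̄ I_n, 0]] and S[R] = ⟨R E₊⟩E₊ - ⟨R E₋⟩E₋. -/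
open Matrix

lemma trace_fromBlocks' {p : Type*} [Fintype p] (A B C D : Matrix p p ℂ) :
    (Matrix.fromBlocks A B C D).trace = A.trace + D.trace := by
  simp [Matrix.trace, Fintype.sum_sum_type, Matrix.fromBlocks, Matrix.diag]

/-- The block-constant matrix `M = [[m, -zu],[-z̄u, m]]` built from the solution `m` of the
scalar cubic equation satisfies the Matrix Dyson Equation `-M⁻¹ = iη + Z + S[M]`. -/
theorem matrix_dyson_equation
    (n : ℕ) (z : ℂ) (η : ℝ) (hη : η ≠ 0) (m u : ℂ)
    (hsign : m.im * η > 0)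
    (heq : -(1 / m) = Complex.I * η + m - ((‖z‖ : ℝ) : ℂ) ^ 2 / (Complex.I * η + m))
    (hu : u = m / (Complex.I * η + m)) :
    let M : Matrix (Fin n ⊕ Fin n) (Fin n ⊕ Fin n) ℂ :=
      Matrix.fromBlocks (m • 1) ((-(z * u)) • 1) ((-((starRingEnd ℂ) z * u)) • 1) (m • 1)
    let Z : Matrix (Fin n ⊕ Fin n) (Fin n ⊕ Fin n) ℂ :=
      Matrix.fromBlocks 0 (z • 1) (((starRingEnd ℂ) z) • 1) 0
    let E₁ : Matrix (Fin n ⊕ Fin n) (Fin n ⊕ Fin n) ℂ := Matrix.fromBlocks 1 0 0 0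
    let E₂ : Matrix (Fin n ⊕ Fin n) (Fin n ⊕ Fin n) ℂ := Matrix.fromBlocks 0 0 0 1
    let S : Matrix (Fin n ⊕ Fin n) (Fin n ⊕ Fin n) ℂ → Matrix (Fin n ⊕ Fin n) (Fin n ⊕ Fin n) ℂ :=
      fun T => ((((2 * n : ℂ))⁻¹ * (T * (E₁ + E₂)).trace) • (E₁ + E₂)
        - (((2 * n : ℂ))⁻¹ * (T * (E₁ - E₂)).trace) • (E₁ - E₂))
    (-M⁻¹ = (Complex.I * η) • (1 : Matrix (Fin n ⊕ Fin n) (Fin n ⊕ Fin n) ℂ) + Z + S M) := by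
  intro M Z E₁ E₂ S
  have hM : M = Matrix.fromBlocks (m • 1) ((-(z * u)) • 1) ((-((starRingEnd ℂ) z * u)) • 1)
      (m • 1) := rfl
  rcases Nat.eq_zero_or_pos n with hn | hn
  · subst hn; exact Subsingleton.elim _ _
  -- scalar facts
  set a : ℂ := Complex.I * η + m with ha_def
  have hm : m ≠ 0 := by
    intro h; rw [h] at hsign; simp at hsign
  have haim : a.im = η + m.im := by
    simp [ha_def, Complex.add_im, Complex.mul_im]
  have ha : a ≠ 0 := by
    intro h
    rw [h] at haim
    simp only [Complex.zero_im] at haim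
    have : η = -m.im := by linarith
    rw [this] at hsign; nlinarith [sq_nonneg m.im]
  have habs : (((‖z‖ : ℝ) : ℂ)) ^ 2 = z * (starRingEnd ℂ) z := by
    rw [Complex.mul_conj]
    norm_cast
    exact Complex.sq_norm z
  have hua : u * a = m := by rw [hu]; field_simp
  have key1 : m * a - z * ((starRingEnd ℂ) z * u) = -1 := by
    rw [habs] at heq
    rw [hu]
    field_simp at heq ⊢
    linear_combination -heq
  -- the candidate inverse
  have hSM : S M = m • (1 : Matrix (Fin n ⊕ Fin n) (Fin n ⊕ Fin n) ℂ) := by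
    have h1 : E₁ + E₂ = (1 : Matrix (Fin n ⊕ Fin n) (Fin n ⊕ Fin n) ℂ) := by
      show Matrix.fromBlocks 1 0 0 0 + Matrix.fromBlocks 0 0 0 1 = 1
      rw [Matrix.fromBlocks_add, ← Matrix.fromBlocks_one]
      norm_num
    have h2 : E₁ - E₂ = Matrix.fromBlocks (1 : Matrix (Fin n) (Fin n) ℂ) 0 0 (-1) := by
      show Matrix.fromBlocks 1 0 0 0 - Matrix.fromBlocks 0 0 0 1 = _
      rw [sub_eq_add_neg, Matrix.fromBlocks_neg, Matrix.fromBlocks_add]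
      norm_num
    have ht1 : (M * (E₁ + E₂)).trace = 2 * n * m := by
      rw [h1, Matrix.mul_one, hM, trace_fromBlocks']
      simp [Matrix.trace_smul, Matrix.trace_one]
      ring
    have ht2 : (M * (E₁ - E₂)).trace = 0 := by
      rw [h2, hM, Matrix.fromBlocks_multiply, trace_fromBlocks']
      simp [Matrix.trace_smul, Matrix.trace_one]
    show _ - _ = _
    rw [ht1, ht2, h1, mul_zero, zero_smul, sub_zero]
    have h2n : (2 * n : ℂ) ≠ 0 := by
      exact mul_ne_zero two_ne_zero (Nat.cast_ne_zero.mpr hn.ne')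
    rw [← mul_assoc, inv_mul_cancel₀ h2n, one_mul]
  rw [hSM]
  -- RHS as a block matrix
  have hRHS : (Complex.I * η) • (1 : Matrix (Fin n ⊕ Fin n) (Fin n ⊕ Fin n) ℂ) + Z
      + m • (1 : Matrix (Fin n ⊕ Fin n) (Fin n ⊕ Fin n) ℂ)
      = Matrix.fromBlocks (a • 1) (z • 1) (((starRingEnd ℂ) z) • 1) (a • 1) := by
    show (Complex.I * η) • (1 : Matrix (Fin n ⊕ Fin n) (Fin n ⊕ Fin n) ℂ)
        + Matrix.fromBlocks 0 (z • 1) (((starRingEnd ℂ) z) • 1) 0 + _ = _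
    rw [← Matrix.fromBlocks_one, Matrix.fromBlocks_smul, Matrix.fromBlocks_smul,
      Matrix.fromBlocks_add, Matrix.fromBlocks_add]
    simp [ha_def, add_smul]
  rw [hRHS]
  have hinv : M⁻¹ = -(Matrix.fromBlocks (a • 1) (z • 1) (((starRingEnd ℂ) z) • 1) (a • 1)) := by
    apply Matrix.inv_eq_right_inv
    rw [Matrix.mul_neg, hM, Matrix.fromBlocks_multiply]
    have e11 : (m • (1 : Matrix (Fin n) (Fin n) ℂ)) * (a • 1)
        + ((-(z * u)) • 1) * (((starRingEnd ℂ) z) • 1) = (-1 : ℂ) • 1 := by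
      rw [Matrix.smul_mul, Matrix.mul_smul, Matrix.smul_mul, Matrix.mul_smul, Matrix.one_mul,
        smul_smul, smul_smul, ← add_smul]
      congr 1
      linear_combination key1
    have e12 : (m • (1 : Matrix (Fin n) (Fin n) ℂ)) * (z • 1)
        + ((-(z * u)) • 1) * (a • 1) = 0 := by
      rw [Matrix.smul_mul, Matrix.mul_smul, Matrix.smul_mul, Matrix.mul_smul, Matrix.one_mul,
        smul_smul, smul_smul, ← add_smul]
      convert zero_smul ℂ (1 : Matrix (Fin n) (Fin n) ℂ)
      linear_combination -(z * hua)
    have e21 : ((-((starRingEnd ℂ) z * u)) • (1 : Matrix (Fin n) (Fin n) ℂ)) * (a • 1)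
        + (m • 1) * (((starRingEnd ℂ) z) • 1) = 0 := by
      rw [Matrix.smul_mul, Matrix.mul_smul, Matrix.smul_mul, Matrix.mul_smul, Matrix.one_mul,
        smul_smul, smul_smul, ← add_smul]
      convert zero_smul ℂ (1 : Matrix (Fin n) (Fin n) ℂ)
      linear_combination -((starRingEnd ℂ) z * hua)
    have e22 : ((-((starRingEnd ℂ) z * u)) • (1 : Matrix (Fin n) (Fin n) ℂ)) * (z • 1)
        + (m • 1) * (a • 1) = (-1 : ℂ) • 1 := by
      rw [Matrix.smul_mul, Matrix.mul_smul, Matrix.smul_mul, Matrix.mul_smul, Matrix.one_mul,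
        smul_smul, smul_smul, ← add_smul]
      congr 1
      linear_combination key1
    rw [e11, e12, e21, e22]
    have hfb : Matrix.fromBlocks ((-1 : ℂ) • (1 : Matrix (Fin n) (Fin n) ℂ)) 0 0 ((-1 : ℂ) • 1)
        = -(1 : Matrix (Fin n ⊕ Fin n) (Fin n ⊕ Fin n) ℂ) := by
      ext (i | i) (j | j) <;> simp [Matrix.one_apply]
    rw [hfb, neg_neg]
  rw [hinv, neg_neg]
end

section
/- For Hermitian H' and any matrices R₁, R₂, the averaged reduction inequality ⟨|G₁| R₁ G₂ R₂ |G₁| R₂* G₂* R₁*⟩ ≤ N ⟨|G₁| R₁ |G₂| R₁*⟩ ⟨|G₁| R₂* |G₂| R₂⟩ holds, where G_i = (H_i - w_i)⁻¹ for Hermitian H_i and non-real w_i, and |G| := (G G*)^{1/2}. -/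
open Matrix
open scoped ComplexOrder

/-- The old Mathlib `Matrix.PosSemidef.sqrt` (removed upstream), with its original definition. -/
noncomputable def Matrix.PosSemidef.sqrt {n : Type*} [Fintype n] [DecidableEq n]
    {A : Matrix n n ℂ} (hA : A.PosSemidef) : Matrix n n ℂ :=
  hA.1.eigenvectorUnitary.1 * diagonal ((↑) ∘ (√·) ∘ hA.1.eigenvalues) *
    (star hA.1.eigenvectorUnitary : Matrix n n ℂ)

lemma Matrix.PosSemidef.sqrt_eq_cfc {n : Type*} [Fintype n] [DecidableEq n]
    {A : Matrix n n ℂ} (hA : A.PosSemidef) : hA.sqrt = cfc Real.sqrt A := by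
  rw [hA.1.cfc_eq]
  simp [IsHermitian.cfc, Matrix.PosSemidef.sqrt]

lemma Matrix.PosSemidef.spec_nonneg {n : Type*} [Fintype n] [DecidableEq n]
    {A : Matrix n n ℂ} (hA : A.PosSemidef) : ∀ x ∈ spectrum ℝ A, 0 ≤ x := by
  intro x hx
  rw [hA.1.spectrum_real_eq_range_eigenvalues] at hx
  obtain ⟨i, rfl⟩ := hx
  exact hA.eigenvalues_nonneg i

lemma Matrix.PosSemidef.posSemidef_sqrt {n : Type*} [Fintype n] [DecidableEq n]
    {A : Matrix n n ℂ} (hA : A.PosSemidef) : hA.sqrt.PosSemidef := by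
  have hd : (diagonal (fun i => ((√(hA.1.eigenvalues i) : ℝ) : ℂ))).PosSemidef := by
    rw [Matrix.posSemidef_diagonal_iff]
    intro i
    simp only [Complex.zero_le_real]
    positivity
  have := hd.mul_mul_conjTranspose_same (hA.1.eigenvectorUnitary : Matrix n n ℂ)
  rw [← Matrix.star_eq_conjTranspose] at this
  exact this

lemma Matrix.PosSemidef.sqrt_mul_self {n : Type*} [Fintype n] [DecidableEq n]
    {A : Matrix n n ℂ} (hA : A.PosSemidef) : hA.sqrt * hA.sqrt = A := by
  have hA' : IsSelfAdjoint A := hA.1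
  rw [hA.sqrt_eq_cfc, ← cfc_mul Real.sqrt Real.sqrt A]
  conv_rhs => rw [← cfc_id' ℝ A]
  exact cfc_congr fun x hx => Real.mul_self_sqrt (hA.spec_nonneg x hx)

lemma Matrix.PosSemidef.eq_sqrt_of_sq_eq {n : Type*} [Fintype n] [DecidableEq n]
    {C A : Matrix n n ℂ} (hC : C.PosSemidef) (hA : A.PosSemidef) (h : C ^ 2 = A) :
    C = hA.sqrt := by
  have hC' : IsSelfAdjoint C := hC.1
  have e1 : C * C = cfc (fun x : ℝ => x * x) C := by
    rw [cfc_mul (fun x : ℝ => x) (fun x : ℝ => x) C, cfc_id' ℝ C]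
  rw [hA.sqrt_eq_cfc, ← h, pow_two, e1, ← cfc_comp Real.sqrt (fun x : ℝ => x * x) C]
  conv_lhs => rw [← cfc_id' ℝ C]
  exact cfc_congr fun x hx => (Real.sqrt_mul_self (hC.spec_nonneg x hx)).symm

lemma resolvent_package (n : ℕ) (H : Matrix (Fin n) (Fin n) ℂ)
    (hH : H.IsHermitian) (w : ℂ) (hw : w.im ≠ 0) :
    (H - w • 1)⁻¹ * ((H - w • 1)⁻¹)ᴴ = ((H - w • 1)⁻¹)ᴴ * (H - w • 1)⁻¹ ∧
    Matrix.PosSemidef.sqrt (Matrix.posSemidef_self_mul_conjTranspose (H - w • 1)⁻¹) * (H - w • 1)⁻¹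
      = (H - w • 1)⁻¹ * Matrix.PosSemidef.sqrt (Matrix.posSemidef_self_mul_conjTranspose (H - w • 1)⁻¹) ∧
    IsUnit (Matrix.PosSemidef.sqrt (Matrix.posSemidef_self_mul_conjTranspose (H - w • 1)⁻¹)).det := by
  set V : Matrix (Fin n) (Fin n) ℂ := (hH.eigenvectorUnitary : Matrix (Fin n) (Fin n) ℂ) with hV
  have hVV : V * star V = 1 := (Matrix.mem_unitaryGroup_iff).mp hH.eigenvectorUnitary.2
  have hVV' : star V * V = 1 := (Matrix.mem_unitaryGroup_iff').mp hH.eigenvectorUnitary.2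
  set d : Fin n → ℂ := fun i => (hH.eigenvalues i : ℂ) - w with hd
  have hd0 : ∀ i, d i ≠ 0 := by
    intro i h
    apply hw
    have h2 : (d i).im = 0 := by rw [h]; rfl
    rw [hd] at h2
    simpa using h2
  -- H - w•1 = V * diagonal d * star V
  have hA : H - w • 1 = V * diagonal d * star V := by
    have h1 : H = V * diagonal ((↑) ∘ hH.eigenvalues) * star V := hH.spectral_theorem
    have h2 : w • (1 : Matrix (Fin n) (Fin n) ℂ) = V * (w • 1) * star V := by
      rw [Matrix.mul_smul, Matrix.smul_mul, Matrix.mul_one, hVV]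
    have h3 : diagonal ((↑) ∘ hH.eigenvalues) - w • (1 : Matrix (Fin n) (Fin n) ℂ)
        = diagonal d := by
      ext i j
      rcases eq_or_ne i j with rfl | hij
      · simp [hd]
      · simp [Matrix.diagonal_apply_ne _ hij, Matrix.one_apply_ne hij]
    rw [h1, h2, ← Matrix.sub_mul, ← Matrix.mul_sub, h3]
  -- helper for products of conjugated diagonals
  have hmul : ∀ (a b : Fin n → ℂ),
      (V * diagonal a * star V) * (V * diagonal b * star V)
        = V * diagonal (fun i => a i * b i) * star V := by
    intro a b
    calc (V * diagonal a * star V) * (V * diagonal b * star V)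
        = V * (diagonal a * ((star V * V) * diagonal b)) * star V := by
          simp only [Matrix.mul_assoc]
      _ = V * diagonal (fun i => a i * b i) * star V := by
          rw [hVV', Matrix.one_mul, Matrix.diagonal_mul_diagonal]
  -- G = V * diagonal d⁻¹ * star V
  have hG : (H - w • 1)⁻¹ = V * diagonal (d⁻¹) * star V := by
    apply Matrix.inv_eq_right_inv
    rw [hA, hmul]
    have : (fun i => d i * (d⁻¹) i) = (1 : Fin n → ℂ) := by
      funext i; simp [mul_inv_cancel₀ (hd0 i)]
    rw [this, show (diagonal (1 : Fin n → ℂ)) = (1 : Matrix (Fin n) (Fin n) ℂ) from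
      Matrix.diagonal_one, Matrix.mul_one, hVV]
  set G := (H - w • 1)⁻¹ with hGdef
  have hGH : Gᴴ = V * diagonal (fun i => starRingEnd ℂ (d i)⁻¹) * star V := by
    rw [hG]
    simp only [Matrix.conjTranspose_mul, Matrix.star_eq_conjTranspose,
      Matrix.conjTranspose_conjTranspose, Matrix.diagonal_conjTranspose]
    rw [Matrix.mul_assoc]
    rfl
  set e : Fin n → ℝ := fun i => ‖d i‖⁻¹ with he
  have he0 : ∀ i, e i ≠ 0 := fun i =>
    inv_ne_zero (by simpa using (norm_ne_zero_iff.mpr (hd0 i)))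
  have hent : ∀ i, (d i)⁻¹ * starRingEnd ℂ ((d i)⁻¹) = ((e i : ℂ)) * ((e i : ℂ)) := by
    intro i
    rw [Complex.mul_conj, Complex.normSq_eq_norm_sq, norm_inv, he]
    push_cast
    ring
  -- the explicit square root candidate
  set C : Matrix (Fin n) (Fin n) ℂ := V * diagonal (fun i => ((e i : ℂ))) * star V with hC
  have hCpsd : C.PosSemidef := by
    have hdiag : (diagonal (fun i => ((e i : ℂ)))).PosSemidef := by
      rw [Matrix.posSemidef_diagonal_iff]
      intro i
      rw [Complex.zero_le_real]
      exact inv_nonneg.mpr (norm_nonneg _)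
    have := hdiag.mul_mul_conjTranspose_same V
    rwa [← Matrix.star_eq_conjTranspose] at this
  have hfg : ∀ (f g : Fin n → ℂ), (∀ i, f i = g i) →
      (V * diagonal f) * star V = (V * diagonal g) * star V := by
    intro f g h
    rw [funext h]
  have hCC : C * C = G * Gᴴ := by
    rw [hC, hGH, hG, hmul, hmul]
    exact hfg _ _ fun i => (hent i).symm
  have hS : C = Matrix.PosSemidef.sqrt (Matrix.posSemidef_self_mul_conjTranspose G) := by
    refine hCpsd.eq_sqrt_of_sq_eq _ ?_
    rw [pow_two, hCC]
  refine ⟨?_, ?_, ?_⟩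
  · rw [hGH, hG, hmul, hmul]
    exact hfg _ _ fun i => mul_comm _ _
  · rw [← hS, hC, hG, hmul, hmul]
    exact hfg _ _ fun i => mul_comm _ _
  · rw [← hS, hC]
    have hdetV : IsUnit V.det := by
      apply IsUnit.of_mul_eq_one (a := V.det) (star V).det
      rw [← Matrix.det_mul, hVV, Matrix.det_one]
    have hdetVs : IsUnit (star V).det := by
      apply IsUnit.of_mul_eq_one (a := (star V).det) V.det
      rw [← Matrix.det_mul, hVV', Matrix.det_one]
    rw [Matrix.det_mul, Matrix.det_mul, Matrix.det_diagonal]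
    refine (hdetV.mul ?_).mul hdetVs
    rw [isUnit_iff_ne_zero]
    exact Finset.prod_ne_zero_iff.mpr fun i _ => by
      simpa using he0 i


-- Cauchy-Schwarz / Frobenius submultiplicativity at the trace level
lemma trace_sq_re (n : ℕ) (A : Matrix (Fin n) (Fin n) ℂ) :
    (A * Aᴴ).trace.re = ∑ i, ∑ j, Complex.normSq (A i j) := by
  simp only [Matrix.trace, Matrix.diag, Matrix.mul_apply, Matrix.conjTranspose_apply]
  rw [Complex.re_sum]
  refine Finset.sum_congr rfl fun i _ => ?_
  rw [Complex.re_sum]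
  refine Finset.sum_congr rfl fun j _ => ?_
  simp [RCLike.star_def, Complex.mul_conj]

lemma frob_cs (n : ℕ) (X Y : Matrix (Fin n) (Fin n) ℂ) :
    ((X * Y) * (X * Y)ᴴ).trace.re ≤ (X * Xᴴ).trace.re * (Y * Yᴴ).trace.re := by
  rw [trace_sq_re, trace_sq_re, trace_sq_re]
  have key : ∀ i j : Fin n, Complex.normSq ((X * Y) i j) ≤
      (∑ k, Complex.normSq (X i k)) * (∑ k, Complex.normSq (Y k j)) := by
    intro i j
    rw [Matrix.mul_apply]
    calc Complex.normSq (∑ k, X i k * Y k j)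
        = ‖∑ k, X i k * Y k j‖ ^ 2 := (Complex.sq_norm _).symm
      _ ≤ (∑ k, ‖X i k‖ * ‖Y k j‖) ^ 2 := by
          apply pow_le_pow_left₀ (norm_nonneg _)
          refine (norm_sum_le _ _).trans ?_
          exact le_of_eq (Finset.sum_congr rfl fun k _ => norm_mul _ _)
      _ ≤ (∑ k, ‖X i k‖ ^ 2) * (∑ k, ‖Y k j‖ ^ 2) :=
          Finset.sum_mul_sq_le_sq_mul_sq _ _ _
      _ = (∑ k, Complex.normSq (X i k)) * (∑ k, Complex.normSq (Y k j)) := by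
          simp [Complex.sq_norm]
  calc ∑ i, ∑ j, Complex.normSq ((X * Y) i j)
      ≤ ∑ i, ∑ j, (∑ k, Complex.normSq (X i k)) * (∑ k, Complex.normSq (Y k j)) := by
        refine Finset.sum_le_sum fun i _ => Finset.sum_le_sum fun j _ => key i j
    _ = (∑ i, ∑ k, Complex.normSq (X i k)) * (∑ k, ∑ j, Complex.normSq (Y k j)) := by
        simp_rw [← Finset.mul_sum, ← Finset.sum_mul]
        rw [Finset.sum_comm (f := fun k j => Complex.normSq (Y k j))]

/-- Averaged reduction inequality:
`⟨|G₁| R₁ G₂ R₂ |G₁| R₂* G₂* R₁*⟩ ≤ N ⟨|G₁| R₁ |G₂| R₁*⟩ ⟨|G₁| R₂* |G₂| R₂⟩`,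
where `G_i = (H_i - w_i)⁻¹` for Hermitian `H_i`, non-real `w_i`, and `|G| = (G G*)^{1/2}`. -/
theorem averaged_reduction_inequality
    (N : ℕ) (H₁ H₂ : Matrix (Fin N) (Fin N) ℂ)
    (hH₁ : H₁.IsHermitian) (hH₂ : H₂.IsHermitian)
    (w₁ w₂ : ℂ) (hw₁ : w₁.im ≠ 0) (hw₂ : w₂.im ≠ 0)
    (R₁ R₂ : Matrix (Fin N) (Fin N) ℂ) :
    let G₁ := (H₁ - w₁ • 1)⁻¹
    let G₂ := (H₂ - w₂ • 1)⁻¹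
    let absG₁ := Matrix.PosSemidef.sqrt (Matrix.posSemidef_self_mul_conjTranspose G₁)
    let absG₂ := Matrix.PosSemidef.sqrt (Matrix.posSemidef_self_mul_conjTranspose G₂)
    (((N : ℂ)⁻¹ * (absG₁ * R₁ * G₂ * R₂ * absG₁ * R₂ᴴ * G₂ᴴ * R₁ᴴ).trace).re
      ≤ N * (((N : ℂ)⁻¹ * (absG₁ * R₁ * absG₂ * R₁ᴴ).trace).re) *
          (((N : ℂ)⁻¹ * (absG₁ * R₂ᴴ * absG₂ * R₂).trace).re)) := by
  intro G₁ G₂ absG₁ absG₂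
  obtain ⟨hnorm, hSG, hSdet⟩ := resolvent_package N H₂ hH₂ w₂ hw₂
  set S : Matrix (Fin N) (Fin N) ℂ := absG₂ with hSdef
  set A1 : Matrix (Fin N) (Fin N) ℂ := absG₁ with hA1def
  have hSpsd : S.PosSemidef := Matrix.PosSemidef.posSemidef_sqrt (Matrix.posSemidef_self_mul_conjTranspose G₂)
  have hA1psd : A1.PosSemidef := Matrix.PosSemidef.posSemidef_sqrt (Matrix.posSemidef_self_mul_conjTranspose G₁)
  obtain ⟨B, hBH, hBB⟩ : ∃ B : Matrix (Fin N) (Fin N) ℂ, Bᴴ = B ∧ B * B = A1 :=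
    ⟨hA1psd.sqrt, hA1psd.posSemidef_sqrt.1, hA1psd.sqrt_mul_self⟩
  obtain ⟨T, hTH, hTT⟩ : ∃ T : Matrix (Fin N) (Fin N) ℂ, Tᴴ = T ∧ T * T = S :=
    ⟨hSpsd.sqrt, hSpsd.posSemidef_sqrt.1, hSpsd.sqrt_mul_self⟩
  have hSH : Sᴴ = S := hSpsd.1
  have hSS : S * S = G₂ * G₂ᴴ := Matrix.PosSemidef.sqrt_mul_self (Matrix.posSemidef_self_mul_conjTranspose G₂)
  have hTdet : IsUnit T.det := by
    have h : IsUnit (T.det * T.det) := by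
      rw [← Matrix.det_mul, hTT]; exact hSdet
    exact isUnit_of_mul_isUnit_left h
  have hTiT : T⁻¹ * T = 1 := Matrix.nonsing_inv_mul _ hTdet
  have hTTi : T * T⁻¹ = 1 := Matrix.mul_nonsing_inv _ hTdet
  have hSiS : S⁻¹ * S = 1 := Matrix.nonsing_inv_mul _ hSdet
  have hSSi : S * S⁻¹ = 1 := Matrix.mul_nonsing_inv _ hSdet
  have hTiH : (T⁻¹)ᴴ = T⁻¹ := by rw [Matrix.conjTranspose_nonsing_inv, hTH]
  have hTiTi : T⁻¹ * T⁻¹ = S⁻¹ := by rw [← Matrix.mul_inv_rev, hTT]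
  -- S⁻¹ commutes with G₂ and G₂ᴴ
  have hGSi : G₂ * S⁻¹ = S⁻¹ * G₂ := by
    calc G₂ * S⁻¹ = S⁻¹ * (S * G₂) * S⁻¹ := by
          rw [← Matrix.mul_assoc, hSiS, Matrix.one_mul]
      _ = S⁻¹ * (G₂ * S) * S⁻¹ := by rw [hSG]
      _ = S⁻¹ * G₂ := by
          rw [Matrix.mul_assoc, Matrix.mul_assoc, hSSi, Matrix.mul_one]
  have hGHSi : G₂ᴴ * S⁻¹ = S⁻¹ * G₂ᴴ := by
    have := congrArg Matrix.conjTranspose hGSi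
    simpa [Matrix.conjTranspose_mul, Matrix.conjTranspose_nonsing_inv, hSH] using this.symm
  have hkey : G₂ᴴ * S⁻¹ * G₂ = S := by
    rw [hGHSi, Matrix.mul_assoc, ← hnorm, ← hSS, ← Matrix.mul_assoc, hSiS, Matrix.one_mul]
  -- contraction helpers (right-associated forms)
  have cB : ∀ Z, B * (B * Z) = A1 * Z := fun Z => by rw [← Matrix.mul_assoc, hBB]
  have cT : ∀ Z, T * (T * Z) = S * Z := fun Z => by rw [← Matrix.mul_assoc, hTT]
  have cTTi : ∀ Z, T * (T⁻¹ * Z) = Z := fun Z => by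
    rw [← Matrix.mul_assoc, hTTi, Matrix.one_mul]
  have cTiTi : ∀ Z, T⁻¹ * (T⁻¹ * Z) = S⁻¹ * Z := fun Z => by
    rw [← Matrix.mul_assoc, hTiTi]
  have ckey : ∀ Z, G₂ᴴ * (S⁻¹ * (G₂ * Z)) = S * Z := fun Z => by
    rw [← Matrix.mul_assoc, ← Matrix.mul_assoc, Matrix.mul_assoc G₂ᴴ S⁻¹ G₂, ← Matrix.mul_assoc,
      hkey]
  set X : Matrix (Fin N) (Fin N) ℂ := B * R₁ * T with hX
  set Y : Matrix (Fin N) (Fin N) ℂ := T⁻¹ * (G₂ * (R₂ * B)) with hY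
  -- the three trace identifications
  have ht0 : ((X * Y) * (X * Y)ᴴ).trace
      = (A1 * R₁ * G₂ * R₂ * A1 * R₂ᴴ * G₂ᴴ * R₁ᴴ).trace := by
    have hXY : X * Y = B * (R₁ * (G₂ * (R₂ * B))) := by
      rw [hX, hY, Matrix.mul_assoc, Matrix.mul_assoc, cTTi]
    rw [hXY]
    simp only [Matrix.conjTranspose_mul, hBH, Matrix.mul_assoc]
    rw [Matrix.trace_mul_comm]
    simp only [Matrix.mul_assoc, cB]
    simp only [← Matrix.mul_assoc]
    try rw [Matrix.trace_mul_comm]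
    try simp only [← Matrix.mul_assoc]
    try rw [Matrix.trace_mul_comm]
    try simp only [Matrix.mul_assoc]
    try simp only [cB]
    try simp only [← Matrix.mul_assoc]
  have ht1 : (X * Xᴴ).trace = (A1 * R₁ * S * R₁ᴴ).trace := by
    rw [hX]
    simp only [Matrix.conjTranspose_mul, hBH, hTH, Matrix.mul_assoc]
    rw [Matrix.trace_mul_comm]
    simp only [Matrix.mul_assoc, cB, cT]
    simp only [← Matrix.mul_assoc]
    try rw [Matrix.trace_mul_comm]
    try simp only [← Matrix.mul_assoc]
    try rw [Matrix.trace_mul_comm]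
    try simp only [Matrix.mul_assoc]
    try simp only [cB]
    try simp only [← Matrix.mul_assoc]
  have ht2 : (Y * Yᴴ).trace = (A1 * R₂ᴴ * S * R₂).trace := by
    rw [hY]
    simp only [Matrix.conjTranspose_mul, hBH, hTiH, Matrix.mul_assoc]
    rw [Matrix.trace_mul_comm]
    simp only [Matrix.mul_assoc, cTiTi, cB]
    -- now : (G₂ * (R₂ * (A1 * (R₂ᴴ * (G₂ᴴ * S⁻¹))))).trace = ...
    rw [Matrix.trace_mul_comm]
    simp only [Matrix.mul_assoc, ckey]
    rw [Matrix.trace_mul_comm]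
    try simp only [Matrix.mul_assoc]
    try simp only [← Matrix.mul_assoc]
    try simp only [Matrix.mul_assoc, cTiTi, ckey]
    try simp only [← Matrix.mul_assoc]
  -- the Cauchy-Schwarz step
  have hcs := frob_cs N X Y
  rw [ht0, ht1, ht2] at hcs
  -- numerics
  rcases Nat.eq_zero_or_pos N with hN | hN
  · subst hN
    simp [Matrix.trace]
  · have hre : ∀ z : ℂ, ((N : ℂ)⁻¹ * z).re = (N : ℝ)⁻¹ * z.re := by
      intro z
      rw [show ((N : ℂ))⁻¹ = (((N : ℝ)⁻¹ : ℝ) : ℂ) by push_cast; ring]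
      exact Complex.re_ofReal_mul _ _
    rw [hre, hre, hre]
    have hNpos : (0 : ℝ) < N := by exact_mod_cast hN
    have hNne : (N : ℝ) ≠ 0 := ne_of_gt hNpos
    calc (N : ℝ)⁻¹ * (A1 * R₁ * G₂ * R₂ * A1 * R₂ᴴ * G₂ᴴ * R₁ᴴ).trace.re
        ≤ (N : ℝ)⁻¹ * ((A1 * R₁ * S * R₁ᴴ).trace.re * (A1 * R₂ᴴ * S * R₂).trace.re) := by
          apply mul_le_mul_of_nonneg_left hcs (by positivity)
      _ = N * ((N : ℝ)⁻¹ * (A1 * R₁ * S * R₁ᴴ).trace.re) *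
            ((N : ℝ)⁻¹ * (A1 * R₂ᴴ * S * R₂).trace.re) := by
          field_simp
          try ring
end
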